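/- Let Q₁, Q₂, R ∈ ℂ[X] with deg(R) ≥ deg(Q₁), deg(R) ≥ deg(Q₂), and R(im) ≠ 0 for all m ∈ ℝ. If μ > max(deg(Q₁)+1, deg(Q₂)+1), then there exists a constant C₅ > 0 such that for all f, g ∈ E_{(β,μ)}, the function m ↦ (1/R(im)) ∫_{−∞}^{∞} Q₁(i(m−m₁)) f(m−m₁) Q₂(im₁) g(m₁) dm₁ belongs to E_{(β,μ)} and its norm is at most C₅ ‖f‖_{(β,μ)} ‖g‖_{(β,μ)}. -/

import Mathlib

open MeasureTheory Real Complex Polynomial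

noncomputable def Enorm (β μ : ℝ) (h : ℝ → ℂ) : ℝ :=
  ⨆ m : ℝ, (1 + |m|) ^ μ * Real.exp (β * |m|) * ‖h m‖

def memE (β μ : ℝ) (h : ℝ → ℂ) : Prop :=
  Continuous h ∧ BddAbove (Set.range fun m : ℝ =>
    (1 + |m|) ^ μ * Real.exp (β * |m|) * ‖h m‖)

lemma memE_pointwise {β μ : ℝ} {f : ℝ → ℂ} (hf : memE β μ f) (y : ℝ) :
    ‖f y‖ ≤ Enorm β μ f * ((1 + |y|) ^ μ * Real.exp (β * |y|))⁻¹ := by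
  have h : (1 + |y|) ^ μ * Real.exp (β * |y|) * ‖f y‖ ≤ Enorm β μ f :=
    le_ciSup hf.2 y
  have hw : (0:ℝ) < (1 + |y|) ^ μ * Real.exp (β * |y|) := by positivity
  rw [← div_eq_mul_inv, le_div_iff₀ hw, mul_comm]
  exact h

lemma Enorm_nonneg {β μ : ℝ} {f : ℝ → ℂ} (hf : memE β μ f) : 0 ≤ Enorm β μ f :=
  le_trans (by positivity) (le_ciSup hf.2 0)

lemma poly_upper (Q : Polynomial ℂ) : ∃ c : ℝ, 0 < c ∧ ∀ x : ℝ,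
    ‖Q.eval (Complex.I * x)‖ ≤ c * (1 + |x|) ^ (Q.natDegree : ℝ) := by
  classical
  set d := Q.natDegree
  refine ⟨(∑ k ∈ Finset.range (d+1), ‖Q.coeff k‖) + 1, by positivity, fun x => ?_⟩
  have hb : (0:ℝ) ≤ 1 + |x| := by positivity
  have hb1 : (1:ℝ) ≤ 1 + |x| := by simp [abs_nonneg]
  have habs : ‖Complex.I * x‖ = |x| := by
    simp [map_mul, Complex.norm_real]
  rw [Real.rpow_natCast]
  calc ‖Q.eval (Complex.I * x)‖
      = ‖∑ k ∈ Finset.range (d+1), Q.coeff k * (Complex.I * x) ^ k‖ := by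
        rw [Polynomial.eval_eq_sum_range]
    _ ≤ ∑ k ∈ Finset.range (d+1), ‖Q.coeff k * (Complex.I * x) ^ k‖ := by
        exact norm_sum_le _ _
    _ ≤ ∑ k ∈ Finset.range (d+1), ‖Q.coeff k‖ * (1 + |x|) ^ d := by
        refine Finset.sum_le_sum fun k hk => ?_
        rw [norm_mul, norm_pow, habs]
        refine mul_le_mul_of_nonneg_left ?_ (by positivity)
        calc |x| ^ k ≤ (1 + |x|) ^ k :=
              pow_le_pow_left₀ (abs_nonneg x) (by linarith) k
          _ ≤ (1 + |x|) ^ d := pow_le_pow_right₀ hb1 (Nat.lt_succ_iff.mp (Finset.mem_range.mp hk))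
    _ = (∑ k ∈ Finset.range (d+1), ‖Q.coeff k‖) * (1 + |x|) ^ d := by
        rw [← Finset.sum_mul]
    _ ≤ ((∑ k ∈ Finset.range (d+1), ‖Q.coeff k‖) + 1) * (1 + |x|) ^ d := by
        refine mul_le_mul_of_nonneg_right (by linarith) (by positivity)

lemma poly_lower (R : Polynomial ℂ) (hR : ∀ m : ℝ, R.eval (Complex.I * (m:ℂ)) ≠ 0) :
    ∃ c : ℝ, 0 < c ∧ ∀ m : ℝ,
      c * (1 + |m|) ^ (R.natDegree : ℝ) ≤ ‖R.eval (Complex.I * m)‖ := by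
  classical
  have hR0 : R ≠ 0 := by
    intro h; exact hR 0 (by simp [h])
  set n := R.natDegree with hn
  set L : ℝ := ‖R.leadingCoeff‖ with hL
  have hLpos : 0 < L := by
    simpa [hL] using (norm_pos_iff.mpr (Polynomial.leadingCoeff_ne_zero.mpr hR0))
  set S : ℝ := ∑ k ∈ Finset.range n, ‖R.coeff k‖ with hS
  have hSnn : 0 ≤ S := Finset.sum_nonneg fun _ _ => norm_nonneg _
  set M : ℝ := max 1 (2 * S / L + 1) with hM
  have hM1 : (1:ℝ) ≤ M := le_max_left _ _
  have hMpos : (0:ℝ) < M := lt_of_lt_of_le one_pos hM1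
  -- large |m| bound
  have hlarge : ∀ m : ℝ, M ≤ |m| → L / 2 * |m| ^ n ≤ ‖R.eval (Complex.I * m)‖ := by
    intro m hm
    have hm1 : (1:ℝ) ≤ |m| := le_trans hM1 hm
    have habs : ‖Complex.I * m‖ = |m| := by simp [map_mul, Complex.norm_real]
    have hev : R.eval (Complex.I * m) =
        R.coeff n * (Complex.I * m) ^ n + ∑ k ∈ Finset.range n, R.coeff k * (Complex.I * m) ^ k := by
      rw [Polynomial.eval_eq_sum_range, Finset.sum_range_succ, add_comm]
    have htail : ‖∑ k ∈ Finset.range n, R.coeff k * (Complex.I * m) ^ k‖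
        ≤ S * |m| ^ n / |m| := by
      rcases Nat.eq_zero_or_pos n with h0 | hpos
      · simp [h0, hS]
      calc ‖∑ k ∈ Finset.range n, R.coeff k * (Complex.I * m) ^ k‖
          ≤ ∑ k ∈ Finset.range n, ‖R.coeff k‖ * |m| ^ k := by
            refine le_trans (norm_sum_le _ _) (Finset.sum_le_sum fun k hk => ?_)
            rw [norm_mul, norm_pow, habs]
        _ ≤ ∑ k ∈ Finset.range n, ‖R.coeff k‖ * |m| ^ (n-1) := by
            refine Finset.sum_le_sum fun k hk => ?_
            have hk' := Finset.mem_range.mp hk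
            refine mul_le_mul_of_nonneg_left (pow_le_pow_right₀ hm1 (by omega)) (norm_nonneg _)
        _ = S * |m| ^ (n-1) := by rw [← Finset.sum_mul]
        _ = S * |m| ^ n / |m| := by
            rw [eq_div_iff (by positivity), mul_assoc, ← pow_succ]
            congr 2
            omega
    have hlead : ‖R.coeff n * (Complex.I * m) ^ n‖ = L * |m| ^ n := by
      rw [norm_mul, norm_pow, habs, hL, hn]; rfl
    have h1 : L * |m| ^ n - S * |m| ^ n / |m| ≤ ‖R.eval (Complex.I * m)‖ := by
      rw [hev]
      calc L * |m| ^ n - S * |m| ^ n / |m|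
          = ‖R.coeff n * (Complex.I * m) ^ n‖
            - ‖∑ k ∈ Finset.range n, R.coeff k * (Complex.I * m) ^ k‖ + 
            (‖∑ k ∈ Finset.range n, R.coeff k * (Complex.I * m) ^ k‖
             - S * |m| ^ n / |m|) := by rw [hlead]; ring
        _ ≤ ‖R.coeff n * (Complex.I * m) ^ n‖
            - ‖∑ k ∈ Finset.range n, R.coeff k * (Complex.I * m) ^ k‖ := by
            linarith [htail]
        _ ≤ _ := by
            have := norm_add_le (R.coeff n * (Complex.I * m) ^ n +
              ∑ k ∈ Finset.range n, R.coeff k * (Complex.I * m) ^ k)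
              (-(∑ k ∈ Finset.range n, R.coeff k * (Complex.I * m) ^ k))
            simp only [add_neg_cancel_right, norm_neg] at this
            linarith
    -- now show L/2 * |m|^n ≤ L*|m|^n - S*|m|^n/|m|
    have hmS : 2 * S / L ≤ |m| := le_trans (by linarith [le_max_right (1:ℝ) (2*S/L+1)]) hm
    have hdiv : S * |m| ^ n / |m| ≤ L / 2 * |m| ^ n := by
      rw [div_le_iff₀ (by positivity)] at hmS
      rw [div_le_iff₀ (by positivity : (0:ℝ) < |m|)]
      have hpn : (0:ℝ) ≤ |m| ^ n := by positivity
      nlinarith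
    linarith
  -- compact part
  obtain ⟨z, hz, hzmin⟩ := (isCompact_Icc (a := -M) (b := M)).exists_isMinOn
    (Set.nonempty_Icc.mpr (by linarith)) ((continuous_norm.comp
      ((R.continuous_aeval).comp (continuous_const.mul Complex.continuous_ofReal))).continuousOn)
  set ε : ℝ := ‖R.eval (Complex.I * z)‖ with hε
  have hεpos : 0 < ε := norm_pos_iff.mpr (hR z)
  refine ⟨min (ε / (1 + M) ^ n) (L / 2 / 2 ^ n), by positivity, fun m => ?_⟩
  rw [Real.rpow_natCast]
  rcases le_or_gt M |m| with hm | hm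
  · have h1m : (1:ℝ) ≤ |m| := le_trans hM1 hm
    calc min (ε / (1 + M) ^ n) (L / 2 / 2 ^ n) * (1 + |m|) ^ n
        ≤ L / 2 / 2 ^ n * (1 + |m|) ^ n := by
          refine mul_le_mul_of_nonneg_right (min_le_right _ _) (by positivity)
      _ ≤ L / 2 / 2 ^ n * (2 * |m|) ^ n := by
          refine mul_le_mul_of_nonneg_left (pow_le_pow_left₀ (by positivity) (by linarith) n) (by positivity)
      _ = L / 2 * |m| ^ n := by rw [mul_pow]; field_simp
      _ ≤ _ := hlarge m hm
  · have hmem : m ∈ Set.Icc (-M) M := by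
      constructor <;> [linarith [neg_abs_le m]; linarith [le_abs_self m]]
    calc min (ε / (1 + M) ^ n) (L / 2 / 2 ^ n) * (1 + |m|) ^ n
        ≤ ε / (1 + M) ^ n * (1 + M) ^ n := by
          refine mul_le_mul (min_le_left _ _) (pow_le_pow_left₀ (by positivity) (by linarith [abs_nonneg m]) n) (by positivity) (by positivity)
      _ = ε := by field_simp
      _ ≤ _ := hzmin hmem

lemma integrable_japanese {a : ℝ} (ha : a < -1) :
    Integrable (fun x : ℝ => (1 + |x|) ^ a) := by
  have h : ((Module.finrank ℝ ℝ : ℝ)) < -a := by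
    simp [Module.finrank_self]; linarith
  have := integrable_one_add_norm (E := ℝ) (μ := volume) (r := -a) h
  simpa [Real.norm_eq_abs] using this

lemma integrable_japanese_shift {a : ℝ} (ha : a < -1) (m : ℝ) :
    Integrable (fun x : ℝ => (1 + |m - x|) ^ a) := by
  have := ((integrable_japanese ha).comp_sub_left m)
  simpa using this

lemma integral_japanese_shift {a : ℝ} (m : ℝ) :
    ∫ x : ℝ, (1 + |m - x|) ^ a = ∫ x : ℝ, (1 + |x|) ^ a := by
  have h1 : (∫ x : ℝ, (1 + |m - x|) ^ a) = ∫ x : ℝ, (1 + |m + x|) ^ a := by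
    rw [← integral_neg_eq_self (fun x : ℝ => (1 + |m + x|) ^ a)]
    simp [sub_eq_add_neg]
  rw [h1]
  exact integral_add_left_eq_self (fun x : ℝ => (1 + |x|) ^ a) m

lemma conv_pointwise {a b : ℝ} (ha : a ≤ 0) (hb : b ≤ 0) (m x : ℝ) :
    (1 + |m - x|) ^ a * (1 + |x|) ^ b ≤
      (2:ℝ) ^ (-a) * (1 + |m|) ^ a * (1 + |x|) ^ b +
      (2:ℝ) ^ (-b) * (1 + |m|) ^ b * (1 + |m - x|) ^ a := by
  have h1x : (0:ℝ) < 1 + |x| := by positivity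
  have h1mx : (0:ℝ) < 1 + |m - x| := by positivity
  have h1m : (0:ℝ) < 1 + |m| := by positivity
  have key : ∀ c : ℝ, c ≤ 0 → ∀ y : ℝ, |m| / 2 ≤ y → 0 ≤ y →
      (1 + y) ^ c ≤ (2:ℝ) ^ (-c) * (1 + |m|) ^ c := by
    intro c hc y hy hy0
    have h2 : (1 + |m|) / 2 ≤ 1 + y := by
      have := abs_nonneg m; linarith
    calc (1 + y) ^ c ≤ ((1 + |m|) / 2) ^ c :=
          Real.rpow_le_rpow_of_nonpos (by positivity) h2 hc
      _ = (2:ℝ) ^ (-c) * (1 + |m|) ^ c := by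
          rw [Real.div_rpow (by positivity) (by norm_num), Real.rpow_neg (by norm_num)]
          field_simp
  rcases le_or_gt (|m| / 2) |x| with h | h
  · have := key b hb |x| h (abs_nonneg x)
    have h2 : (1 + |m - x|) ^ a * (1 + |x|) ^ b ≤
        (1 + |m - x|) ^ a * ((2:ℝ) ^ (-b) * (1 + |m|) ^ b) :=
      mul_le_mul_of_nonneg_left this (by positivity)
    nlinarith [Real.rpow_natCast (2:ℝ) 0, mul_nonneg (mul_nonneg (le_of_lt (Real.rpow_pos_of_pos two_pos (-a))) (le_of_lt (Real.rpow_pos_of_pos h1m a))) (le_of_lt (Real.rpow_pos_of_pos h1x b))]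
  · have hmx : |m| / 2 ≤ |m - x| := by
      have := abs_sub_abs_le_abs_sub m x
      have h3 := abs_nonneg (m - x)
      linarith [le_abs_self x, neg_abs_le x, abs_sub_abs_le_abs_sub m x]
    have := key a ha |m - x| hmx (abs_nonneg _)
    have h2 : (1 + |m - x|) ^ a * (1 + |x|) ^ b ≤
        ((2:ℝ) ^ (-a) * (1 + |m|) ^ a) * (1 + |x|) ^ b :=
      mul_le_mul_of_nonneg_right this (by positivity)
    nlinarith [mul_nonneg (mul_nonneg (le_of_lt (Real.rpow_pos_of_pos two_pos (-b))) (le_of_lt (Real.rpow_pos_of_pos h1m b))) (le_of_lt (Real.rpow_pos_of_pos h1mx a))]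

lemma conv_integral_bound {a b : ℝ} (ha : a < -1) (hb : b < -1) :
    ∃ K : ℝ, 0 < K ∧ ∀ m : ℝ,
      (Integrable fun x : ℝ => (1 + |m - x|) ^ a * (1 + |x|) ^ b) ∧
      ∫ x : ℝ, (1 + |m - x|) ^ a * (1 + |x|) ^ b ≤ K * (1 + |m|) ^ max a b := by
  have ha0 : a ≤ 0 := by linarith
  have hb0 : b ≤ 0 := by linarith
  set Ia : ℝ := ∫ x : ℝ, (1 + |x|) ^ a with hIa
  set Ib : ℝ := ∫ x : ℝ, (1 + |x|) ^ b with hIb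
  have hIann : 0 ≤ Ia := integral_nonneg fun x => by positivity
  have hIbnn : 0 ≤ Ib := integral_nonneg fun x => by positivity
  refine ⟨(2:ℝ) ^ (-a) * Ib + (2:ℝ) ^ (-b) * Ia + 1, by positivity, fun m => ?_⟩
  have hint : Integrable fun x : ℝ => (1 + |m - x|) ^ a * (1 + |x|) ^ b := by
    refine (integrable_japanese hb).mono' ?_ ?_
    · have hc : Continuous fun x : ℝ => (1 + |m - x|) ^ a * (1 + |x|) ^ b := by
        apply Continuous.mul
        · apply Continuous.rpow_const
          · exact continuous_const.add (continuous_const.sub continuous_id).abs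
          · intro x; left; positivity
        · apply Continuous.rpow_const
          · exact continuous_const.add _root_.continuous_abs
          · intro x; left; positivity
      exact hc.aestronglyMeasurable
    · refine Filter.Eventually.of_forall fun x => ?_
      rw [Real.norm_eq_abs, _root_.abs_of_nonneg (by positivity)]
      have h1 : (1 + |m - x|) ^ a ≤ 1 :=
        Real.rpow_le_one_of_one_le_of_nonpos (by linarith [abs_nonneg (m - x)]) ha0
      nlinarith [Real.rpow_nonneg (by positivity : (0:ℝ) ≤ 1 + |x|) b,
        Real.rpow_nonneg (by positivity : (0:ℝ) ≤ 1 + |m - x|) a]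
  refine ⟨hint, ?_⟩
  have hintRHS : Integrable fun x : ℝ =>
      (2:ℝ) ^ (-a) * (1 + |m|) ^ a * (1 + |x|) ^ b +
      (2:ℝ) ^ (-b) * (1 + |m|) ^ b * (1 + |m - x|) ^ a :=
    (((integrable_japanese hb).const_mul _).add
      (((integrable_japanese_shift ha m)).const_mul _))
  calc ∫ x : ℝ, (1 + |m - x|) ^ a * (1 + |x|) ^ b
      ≤ ∫ x : ℝ, ((2:ℝ) ^ (-a) * (1 + |m|) ^ a * (1 + |x|) ^ b +
        (2:ℝ) ^ (-b) * (1 + |m|) ^ b * (1 + |m - x|) ^ a) :=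
        integral_mono hint hintRHS (fun x => conv_pointwise ha0 hb0 m x)
    _ = (2:ℝ) ^ (-a) * (1 + |m|) ^ a * Ib + (2:ℝ) ^ (-b) * (1 + |m|) ^ b * Ia := by
        rw [integral_add ((integrable_japanese hb).const_mul _)
          ((integrable_japanese_shift ha m).const_mul _),
          integral_const_mul, integral_const_mul, integral_japanese_shift]
    _ ≤ (2:ℝ) ^ (-a) * (1 + |m|) ^ (max a b) * Ib + (2:ℝ) ^ (-b) * (1 + |m|) ^ (max a b) * Ia := by
        have h1 : (1 + |m|) ^ a ≤ (1 + |m|) ^ (max a b) :=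
          Real.rpow_le_rpow_of_exponent_le (by linarith [abs_nonneg m]) (le_max_left a b)
        have h2 : (1 + |m|) ^ b ≤ (1 + |m|) ^ (max a b) :=
          Real.rpow_le_rpow_of_exponent_le (by linarith [abs_nonneg m]) (le_max_right a b)
        have p1 : (0:ℝ) ≤ (2:ℝ) ^ (-a) := le_of_lt (Real.rpow_pos_of_pos two_pos _)
        have p2 : (0:ℝ) ≤ (2:ℝ) ^ (-b) := le_of_lt (Real.rpow_pos_of_pos two_pos _)
        exact add_le_add
          (mul_le_mul_of_nonneg_right (mul_le_mul_of_nonneg_left h1 p1) hIbnn)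
          (mul_le_mul_of_nonneg_right (mul_le_mul_of_nonneg_left h2 p2) hIann)
    _ ≤ ((2:ℝ) ^ (-a) * Ib + (2:ℝ) ^ (-b) * Ia + 1) * (1 + |m|) ^ (max a b) := by
        have := le_of_lt (Real.rpow_pos_of_pos (by positivity : (0:ℝ) < 1 + |m|) (max a b))
        nlinarith

/-- Proposition 7 of the paper: the weighted convolution with polynomial
kernels maps `E_{(β,μ)} × E_{(β,μ)}` continuously into `E_{(β,μ)}`. -/
theorem polynomial_convolution_bound (β μ : ℝ) (hβ : 0 < β)
    (Q₁ Q₂ R : Polynomial ℂ)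
    (hdeg₁ : Q₁.degree ≤ R.degree) (hdeg₂ : Q₂.degree ≤ R.degree)
    (hR : ∀ m : ℝ, R.eval (Complex.I * (m : ℂ)) ≠ 0)
    (hμ : (max (Q₁.natDegree + 1) (Q₂.natDegree + 1) : ℝ) < μ) :
    ∃ C₅ : ℝ, 0 < C₅ ∧ ∀ f g : ℝ → ℂ, memE β μ f → memE β μ g →
      memE β μ (fun m => (R.eval (Complex.I * (m : ℂ)))⁻¹ *
        ∫ m₁ : ℝ, Q₁.eval (Complex.I * ((m - m₁ : ℝ) : ℂ)) * f (m - m₁) *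
          (Q₂.eval (Complex.I * (m₁ : ℂ)) * g m₁)) ∧
      Enorm β μ (fun m => (R.eval (Complex.I * (m : ℂ)))⁻¹ *
        ∫ m₁ : ℝ, Q₁.eval (Complex.I * ((m - m₁ : ℝ) : ℂ)) * f (m - m₁) *
          (Q₂.eval (Complex.I * (m₁ : ℂ)) * g m₁)) ≤
        C₅ * Enorm β μ f * Enorm β μ g := by
  classical
  obtain ⟨c₁, hc₁, hQ₁⟩ := poly_upper Q₁
  obtain ⟨c₂, hc₂, hQ₂⟩ := poly_upper Q₂
  obtain ⟨cR, hcR, hRlow⟩ := poly_lower R hR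
  set d₁ := Q₁.natDegree with hd₁
  set d₂ := Q₂.natDegree with hd₂
  set a : ℝ := (d₁ : ℝ) - μ with ha_def
  set b : ℝ := (d₂ : ℝ) - μ with hb_def
  have ha : a < -1 := by
    have h1 : (d₁:ℝ) + 1 ≤ max ((d₁:ℝ) + 1) ((d₂:ℝ) + 1) := le_max_left _ _
    rw [ha_def]; linarith [lt_of_le_of_lt h1 hμ]
  have hb : b < -1 := by
    have h1 : (d₂:ℝ) + 1 ≤ max ((d₁:ℝ) + 1) ((d₂:ℝ) + 1) := le_max_right _ _
    rw [hb_def]; linarith [lt_of_le_of_lt h1 hμ]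
  obtain ⟨K, hK, hKey⟩ := conv_integral_bound ha hb
  set C₅ : ℝ := c₁ * c₂ * K / cR with hC₅
  refine ⟨C₅, by positivity, fun f g hf hg => ?_⟩
  set Nf := Enorm β μ f with hNf_def
  set Ng := Enorm β μ g with hNg_def
  have hNf := Enorm_nonneg hf
  have hNg := Enorm_nonneg hg
  set F : ℝ → ℝ → ℂ := fun m x => Q₁.eval (Complex.I * ((m - x : ℝ) : ℂ)) * f (m - x) *
    (Q₂.eval (Complex.I * (x : ℂ)) * g x) with hF
  have hQc : ∀ Q : Polynomial ℂ, Continuous fun y : ℝ => Q.eval (Complex.I * (y : ℂ)) :=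
    fun Q => (Q.continuous_aeval).comp (continuous_const.mul Complex.continuous_ofReal)
  -- central pointwise estimate
  have hpt : ∀ m x : ℝ, ‖F m x‖ ≤
      c₁ * c₂ * Nf * Ng * Real.exp (-(β * |m|)) * ((1 + |m - x|) ^ a * (1 + |x|) ^ b) := by
    intro m x
    have hy : (0:ℝ) < 1 + |m - x| := by positivity
    have hx : (0:ℝ) < 1 + |x| := by positivity
    have h1 := hQ₁ (m - x)
    have h2 := hQ₂ x
    have h3 := memE_pointwise hf (m - x)
    have h4 := memE_pointwise hg x
    have hexp : (Real.exp (β * |m - x|))⁻¹ * (Real.exp (β * |x|))⁻¹ ≤ Real.exp (-(β * |m|)) := by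
      rw [← Real.exp_neg, ← Real.exp_neg, ← Real.exp_add, Real.exp_le_exp]
      have htri : |m| ≤ |m - x| + |x| := by
        calc |m| = |(m - x) + x| := by ring_nf
          _ ≤ |m - x| + |x| := abs_add_le _ _
      nlinarith [hβ.le]
    rw [hF]
    simp only [norm_mul]
    calc ‖Q₁.eval (Complex.I * ((m - x : ℝ) : ℂ))‖ * ‖f (m - x)‖ *
          (‖Q₂.eval (Complex.I * (x : ℂ))‖ * ‖g x‖)
        ≤ (c₁ * (1 + |m - x|) ^ (d₁ : ℝ)) *
            (Nf * ((1 + |m - x|) ^ μ * Real.exp (β * |m - x|))⁻¹) *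
          ((c₂ * (1 + |x|) ^ (d₂ : ℝ)) * (Ng * ((1 + |x|) ^ μ * Real.exp (β * |x|))⁻¹)) := by
          have n1 := norm_nonneg (Q₁.eval (Complex.I * ((m - x : ℝ) : ℂ)))
          have n2 := norm_nonneg (f (m - x))
          have n3 := norm_nonneg (Q₂.eval (Complex.I * (x : ℂ)))
          have n4 := norm_nonneg (g x)
          exact mul_le_mul (mul_le_mul h1 h3 n2 (by positivity))
            (mul_le_mul h2 h4 n4 (by positivity)) (by positivity) (by positivity)
      _ = c₁ * c₂ * Nf * Ng * ((Real.exp (β * |m - x|))⁻¹ * (Real.exp (β * |x|))⁻¹) *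
          ((1 + |m - x|) ^ a * (1 + |x|) ^ b) := by
          rw [ha_def, hb_def, Real.rpow_sub hy, Real.rpow_sub hx]
          have e1 := Real.exp_ne_zero (β * |m - x|)
          have e2 := Real.exp_ne_zero (β * |x|)
          have p1 := (Real.rpow_pos_of_pos hy μ).ne'
          have p2 := (Real.rpow_pos_of_pos hx μ).ne'
          field_simp
      _ ≤ c₁ * c₂ * Nf * Ng * Real.exp (-(β * |m|)) * ((1 + |m - x|) ^ a * (1 + |x|) ^ b) := by
          refine mul_le_mul_of_nonneg_right (mul_le_mul_of_nonneg_left hexp (by positivity)) ?_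
          positivity
  -- norm of the integral
  have hnorm : ∀ m : ℝ, ‖∫ x, F m x‖ ≤
      c₁ * c₂ * Nf * Ng * Real.exp (-(β * |m|)) * (K * (1 + |m|) ^ max a b) := by
    intro m
    calc ‖∫ x, F m x‖ ≤ ∫ x, ‖F m x‖ := by
          simpa using norm_integral_le_integral_norm (F m)
      _ ≤ ∫ x, c₁ * c₂ * Nf * Ng * Real.exp (-(β * |m|)) *
            ((1 + |m - x|) ^ a * (1 + |x|) ^ b) := by
          refine integral_mono_of_nonneg (Filter.Eventually.of_forall fun x => norm_nonneg _)
            (((hKey m).1).const_mul _) (Filter.Eventually.of_forall fun x => hpt m x)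
      _ = c₁ * c₂ * Nf * Ng * Real.exp (-(β * |m|)) *
            ∫ x, (1 + |m - x|) ^ a * (1 + |x|) ^ b := integral_const_mul _ _
      _ ≤ _ := mul_le_mul_of_nonneg_left (hKey m).2 (by positivity)
  -- weighted pointwise bound
  have hw : ∀ m : ℝ, (1 + |m|) ^ μ * Real.exp (β * |m|) *
      ‖(R.eval (Complex.I * (m : ℂ)))⁻¹ * ∫ x, F m x‖ ≤ C₅ * Nf * Ng := by
    intro m
    have hRm : 0 < ‖R.eval (Complex.I * (m : ℂ))‖ := norm_pos_iff.mpr (hR m)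
    have h1m : (0:ℝ) < 1 + |m| := by positivity
    have hmax : max a b = ((max d₁ d₂ : ℕ) : ℝ) - μ := by
      rw [ha_def, hb_def, Nat.cast_max, max_sub_sub_right]
    have hdle : ((max d₁ d₂ : ℕ) : ℝ) ≤ (R.natDegree : ℝ) := by
      have u1 : d₁ ≤ R.natDegree := Polynomial.natDegree_le_natDegree hdeg₁
      have u2 : d₂ ≤ R.natDegree := Polynomial.natDegree_le_natDegree hdeg₂
      exact_mod_cast max_le u1 u2
    have hTR : (1 + |m|) ^ ((R.natDegree : ℝ)) *
        (‖R.eval (Complex.I * (m : ℂ))‖)⁻¹ ≤ cR⁻¹ := by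
      have h := hRlow m
      have h2 : (1 + |m|) ^ ((R.natDegree : ℝ)) ≤
          ‖R.eval (Complex.I * (m : ℂ))‖ / cR := by
        rw [le_div_iff₀ hcR]; linarith [mul_comm cR ((1 + |m|) ^ ((R.natDegree : ℝ)))]
      calc (1 + |m|) ^ ((R.natDegree : ℝ)) * (‖R.eval (Complex.I * (m : ℂ))‖)⁻¹
          ≤ (‖R.eval (Complex.I * (m : ℂ))‖ / cR) *
            (‖R.eval (Complex.I * (m : ℂ))‖)⁻¹ :=
            mul_le_mul_of_nonneg_right h2 (by positivity)
        _ = cR⁻¹ := by field_simp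
    rw [norm_mul, norm_inv]
    calc (1 + |m|) ^ μ * Real.exp (β * |m|) *
          ((‖R.eval (Complex.I * (m : ℂ))‖)⁻¹ * ‖∫ x, F m x‖)
        ≤ (1 + |m|) ^ μ * Real.exp (β * |m|) *
          ((‖R.eval (Complex.I * (m : ℂ))‖)⁻¹ *
           (c₁ * c₂ * Nf * Ng * Real.exp (-(β * |m|)) * (K * (1 + |m|) ^ max a b))) := by
          refine mul_le_mul_of_nonneg_left (mul_le_mul_of_nonneg_left (hnorm m) (by positivity))
            (by positivity)
      _ = (c₁ * c₂ * K * Nf * Ng) * ((1 + |m|) ^ μ * (1 + |m|) ^ max a b) *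
          (Real.exp (β * |m|) * Real.exp (-(β * |m|))) *
          (‖R.eval (Complex.I * (m : ℂ))‖)⁻¹ := by ring
      _ = (c₁ * c₂ * K * Nf * Ng) * (1 + |m|) ^ ((max d₁ d₂ : ℕ) : ℝ) *
          (‖R.eval (Complex.I * (m : ℂ))‖)⁻¹ := by
          rw [← Real.rpow_add h1m, ← Real.exp_add, add_neg_cancel, Real.exp_zero, hmax,
            show μ + (((max d₁ d₂ : ℕ) : ℝ) - μ) = ((max d₁ d₂ : ℕ) : ℝ) from by ring, mul_one]
      _ ≤ (c₁ * c₂ * K * Nf * Ng) * (1 + |m|) ^ ((R.natDegree : ℝ)) *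
          (‖R.eval (Complex.I * (m : ℂ))‖)⁻¹ := by
          refine mul_le_mul_of_nonneg_right (mul_le_mul_of_nonneg_left
            (Real.rpow_le_rpow_of_exponent_le (by linarith [abs_nonneg m]) hdle) (by positivity))
            (by positivity)
      _ = (c₁ * c₂ * K * Nf * Ng) * ((1 + |m|) ^ ((R.natDegree : ℝ)) *
          (‖R.eval (Complex.I * (m : ℂ))‖)⁻¹) := by ring
      _ ≤ (c₁ * c₂ * K * Nf * Ng) * cR⁻¹ :=
          mul_le_mul_of_nonneg_left hTR (by positivity)
      _ = C₅ * Nf * Ng := by rw [hC₅]; field_simp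
  -- continuity
  have hb0 : b ≤ 0 := by linarith
  have ha0 : a ≤ 0 := by linarith
  have hcont : Continuous (fun m : ℝ => (R.eval (Complex.I * (m : ℂ)))⁻¹ * ∫ x, F m x) := by
    apply Continuous.mul
    · exact (hQc R).inv₀ hR
    · rw [continuous_iff_continuousAt]
      intro m₀
      apply continuousAt_of_dominated (bound := fun x => c₁ * c₂ * Nf * Ng * (1 + |x|) ^ b)
      · refine Filter.Eventually.of_forall fun m' => ?_
        have : Continuous fun x => F m' x := by
          refine Continuous.mul (Continuous.mul ?_ ?_) (Continuous.mul ?_ ?_)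
          · exact (hQc Q₁).comp (continuous_const.sub continuous_id)
          · exact hf.1.comp (continuous_const.sub continuous_id)
          · exact hQc Q₂
          · exact hg.1
        exact this.aestronglyMeasurable
      · refine Filter.Eventually.of_forall fun m' => Filter.Eventually.of_forall fun x => ?_
        refine (hpt m' x).trans ?_
        have e1 : Real.exp (-(β * |m'|)) ≤ 1 := by
          rw [Real.exp_le_one_iff]
          have := abs_nonneg m'
          nlinarith [hβ.le]
        have e2 : (1 + |m' - x|) ^ a ≤ 1 :=
          Real.rpow_le_one_of_one_le_of_nonpos (by linarith [abs_nonneg (m' - x)]) ha0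
        have pb : (0:ℝ) ≤ (1 + |x|) ^ b := Real.rpow_nonneg (by positivity) _
        have pa : (0:ℝ) ≤ (1 + |m' - x|) ^ a := Real.rpow_nonneg (by positivity) _
        have pe : (0:ℝ) ≤ Real.exp (-(β * |m'|)) := (Real.exp_pos _).le
        have pc : (0:ℝ) ≤ c₁ * c₂ * Nf * Ng := by positivity
        calc c₁ * c₂ * Nf * Ng * Real.exp (-(β * |m'|)) * ((1 + |m' - x|) ^ a * (1 + |x|) ^ b)
            ≤ c₁ * c₂ * Nf * Ng * 1 * (1 * (1 + |x|) ^ b) := by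
              refine mul_le_mul (mul_le_mul_of_nonneg_left e1 pc)
                (mul_le_mul_of_nonneg_right e2 pb) (by positivity) (by positivity)
          _ = c₁ * c₂ * Nf * Ng * (1 + |x|) ^ b := by ring
      · exact (integrable_japanese hb).const_mul _
      · refine Filter.Eventually.of_forall fun x => ?_
        have : Continuous fun m' => F m' x := by
          refine Continuous.mul (Continuous.mul ?_ ?_) continuous_const
          · exact (hQc Q₁).comp (continuous_id.sub continuous_const)
          · exact hf.1.comp (continuous_id.sub continuous_const)
        exact this.continuousAt
  refine ⟨⟨hcont, ⟨C₅ * Nf * Ng, ?_⟩⟩, ?_⟩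
  · rintro y ⟨m, rfl⟩
    exact hw m
  · exact ciSup_le hw
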